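/- Consider the quiver with one vertex and no edges. The variety M(d, v₀, v) of pairs (t, B) with t ∈ End(ℂ^d), t² = 0, rank t = v₀, and B a subspace of ℂ^d with im t ⊆ B ⊆ ker t and dim B = d − v, is nonempty if and only if v₀ ≤ v ≤ d − v₀; when nonempty it is a smooth connected quasi-projective variety. -/

import Mathlib

open Module LinearMap Submodule

private lemma complWithin {𝕜 : Type*} [Field 𝕜] {V : Type*} [AddCommGroup V] [Module 𝕜 V]
    {p q : Submodule 𝕜 V} (h : p ≤ q) :
    ∃ r : Submodule 𝕜 V, p ⊓ r = ⊥ ∧ p ⊔ r = q := by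
  obtain ⟨r₀, hr₀⟩ := Submodule.exists_isCompl (p.comap q.subtype)
  have hmc : map q.subtype (p.comap q.subtype) = p := by
    rw [Submodule.map_comap_subtype, inf_eq_right.2 h]
  refine ⟨r₀.map q.subtype, ?_, ?_⟩
  · have h1 := Submodule.map_inf q.subtype (Submodule.injective_subtype q)
      (p := p.comap q.subtype) (q := r₀)
    rw [hr₀.inf_eq_bot, Submodule.map_bot, hmc] at h1
    exact h1.symm
  · have h1 := Submodule.map_sup (p.comap q.subtype) r₀ q.subtype
    rw [hr₀.sup_eq_top, Submodule.map_subtype_top, hmc] at h1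
    exact h1.symm

private lemma decomp {V : Type*} [AddCommGroup V] [Module ℂ V] [FiniteDimensional ℂ V]
    (t : V →ₗ[ℂ] V) (B : Submodule ℂ V) (h1 : range t ≤ B) (h2 : B ≤ ker t) :
    ∃ (p D E : Submodule ℂ V) (tp : ↥p ≃ₗ[ℂ] ↥(range t)),
      IsCompl (ker t) p ∧ (B ⊓ D = ⊥ ∧ B ⊔ D = ker t) ∧
      (range t ⊓ E = ⊥ ∧ range t ⊔ E = B) ∧
      (∀ x : ↥p, (tp x : V) = t x) ∧
      finrank ℂ ↥p = finrank ℂ ↥(range t) ∧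
      finrank ℂ ↥D + finrank ℂ ↥B = finrank ℂ ↥(ker t) ∧
      finrank ℂ ↥E + finrank ℂ ↥(range t) = finrank ℂ ↥B := by
  obtain ⟨p, hp⟩ := Submodule.exists_isCompl (ker t)
  obtain ⟨D, hD1, hD2⟩ := complWithin h2
  obtain ⟨E, hE1, hE2⟩ := complWithin h1
  set lm : ↥p →ₗ[ℂ] ↥(range t) :=
    LinearMap.codRestrict (range t) (t ∘ₗ p.subtype) (fun x => LinearMap.mem_range_self _ _)
    with hlm
  have hlmapp : ∀ x : ↥p, (lm x : V) = t x := fun x => rfl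
  have hinj : Function.Injective lm := by
    intro x y hxy
    have hxy' : t ((x : V) - y) = 0 := by
      rw [map_sub, sub_eq_zero, ← hlmapp, ← hlmapp, hxy]
    have hmem : (x : V) - y ∈ ker t ⊓ p := ⟨hxy', sub_mem x.2 y.2⟩
    rw [hp.inf_eq_bot, Submodule.mem_bot, sub_eq_zero] at hmem
    exact Subtype.ext hmem
  have hsurj : Function.Surjective lm := by
    rintro ⟨r, hr⟩
    obtain ⟨y, rfl⟩ := hr
    have hy : y ∈ ker t ⊔ p := by rw [hp.sup_eq_top]; trivial
    obtain ⟨k, hk, a, ha, rfl⟩ := Submodule.mem_sup.1 hy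
    refine ⟨⟨a, ha⟩, Subtype.ext ?_⟩
    rw [hlmapp]
    simp only [map_add, LinearMap.mem_ker.1 hk, zero_add]
  refine ⟨p, D, E, LinearEquiv.ofBijective lm ⟨hinj, hsurj⟩, hp, ⟨hD1, hD2⟩, ⟨hE1, hE2⟩,
    fun x => rfl, ?_, ?_, ?_⟩
  · have e1 := Submodule.finrank_add_eq_of_isCompl hp
    have e2 := LinearMap.finrank_range_add_finrank_ker t
    omega
  · have e1 := Submodule.finrank_sup_add_finrank_inf_eq B D
    rw [hD1, hD2, finrank_bot] at e1
    omega
  · have e1 := Submodule.finrank_sup_add_finrank_inf_eq (range t) E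
    rw [hE1, hE2, finrank_bot] at e1
    omega

private lemma transKey {V : Type*} [AddCommGroup V] [Module ℂ V] [FiniteDimensional ℂ V]
    (t t' : V →ₗ[ℂ] V) (B B' : Submodule ℂ V)
    (h1 : range t ≤ B) (h2 : B ≤ ker t)
    (h1' : range t' ≤ B') (h2' : B' ≤ ker t')
    (hr : finrank ℂ ↥(range t) = finrank ℂ ↥(range t'))
    (hB : finrank ℂ ↥B = finrank ℂ ↥B') :
    ∃ g : V ≃ₗ[ℂ] V, t' = (g : V →ₗ[ℂ] V) ∘ₗ t ∘ₗ (g.symm : V →ₗ[ℂ] V) ∧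
      B' = B.map (g : V →ₗ[ℂ] V) := by
  obtain ⟨p, D, E, tp, hp, ⟨hD1, hD2⟩, ⟨hE1, hE2⟩, htp, hfp, hfD, hfE⟩ := decomp t B h1 h2
  obtain ⟨p', D', E', tp', hp', ⟨hD1', hD2'⟩, ⟨hE1', hE2'⟩, htp', hfp', hfD', hfE'⟩ :=
    decomp t' B' h1' h2'
  have hDK : D ≤ ker t := hD2 ▸ le_sup_right
  have hEB : E ≤ B := hE2 ▸ le_sup_right
  have hDK' : D' ≤ ker t' := hD2' ▸ le_sup_right
  have hEB' : E' ≤ B' := hE2' ▸ le_sup_right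
  have hK : finrank ℂ ↥(ker t) = finrank ℂ ↥(ker t') := by
    have e1 := LinearMap.finrank_range_add_finrank_ker t
    have e2 := LinearMap.finrank_range_add_finrank_ker t'
    omega
  have hgp : finrank ℂ ↥p = finrank ℂ ↥p' := by omega
  have hgD : finrank ℂ ↥D = finrank ℂ ↥D' := by omega
  have hgE : finrank ℂ ↥E = finrank ℂ ↥E' := by omega
  set gp : ↥p ≃ₗ[ℂ] ↥p' := LinearEquiv.ofFinrankEq _ _ hgp with hgpdef
  set gD : ↥D ≃ₗ[ℂ] ↥D' := LinearEquiv.ofFinrankEq _ _ hgD with hgDdef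
  set gE : ↥E ≃ₗ[ℂ] ↥E' := LinearEquiv.ofFinrankEq _ _ hgE with hgEdef
  set gR : ↥(range t) ≃ₗ[ℂ] ↥(range t') := (tp.symm.trans gp).trans tp' with hgRdef
  set f : (↥p × ↥D × ↥E × ↥(range t)) →ₗ[ℂ] V :=
    LinearMap.coprod p.subtype (LinearMap.coprod D.subtype
      (LinearMap.coprod E.subtype (range t).subtype)) with hfdef
  set f' : (↥p' × ↥D' × ↥E' × ↥(range t')) →ₗ[ℂ] V :=
    LinearMap.coprod p'.subtype (LinearMap.coprod D'.subtype
      (LinearMap.coprod E'.subtype (range t').subtype)) with hf'def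
  have hfapp : ∀ q : ↥p × ↥D × ↥E × ↥(range t),
      f q = (q.1 : V) + ((q.2.1 : V) + ((q.2.2.1 : V) + (q.2.2.2 : V))) := fun q => rfl
  have hf'app : ∀ q : ↥p' × ↥D' × ↥E' × ↥(range t'),
      f' q = (q.1 : V) + ((q.2.1 : V) + ((q.2.2.1 : V) + (q.2.2.2 : V))) := fun q => rfl
  -- injectivity of f
  have hfinj : Function.Injective f := by
    rw [← LinearMap.ker_eq_bot, eq_bot_iff]
    rintro ⟨a, b, c, r⟩ hq
    rw [LinearMap.mem_ker, hfapp] at hq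
    have hbcr : (b : V) + ((c : V) + (r : V)) ∈ ker t :=
      add_mem (hDK b.2) (add_mem (h2 (hEB c.2)) (h2 (h1 r.2)))
    have ha0 : (a : V) = 0 := by
      have hmem : (a : V) ∈ ker t ⊓ p :=
        ⟨by rw [eq_neg_of_add_eq_zero_left hq]; exact neg_mem hbcr, a.2⟩
      rwa [hp.inf_eq_bot, Submodule.mem_bot] at hmem
    rw [ha0, zero_add] at hq
    have hcr : (c : V) + (r : V) ∈ B := add_mem (hEB c.2) (h1 r.2)
    have hb0 : (b : V) = 0 := by
      have hmem : (b : V) ∈ B ⊓ D :=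
        ⟨by rw [eq_neg_of_add_eq_zero_left hq]; exact neg_mem hcr, b.2⟩
      rwa [hD1, Submodule.mem_bot] at hmem
    rw [hb0, zero_add] at hq
    have hc0 : (c : V) = 0 := by
      have hmem : (c : V) ∈ range t ⊓ E :=
        ⟨by rw [eq_neg_of_add_eq_zero_left hq]; exact neg_mem r.2, c.2⟩
      rwa [hE1, Submodule.mem_bot] at hmem
    rw [hc0, zero_add] at hq
    simp only [SetLike.mem_coe, Submodule.mem_bot, Prod.mk_eq_zero]
    exact ⟨Subtype.ext ha0, Subtype.ext hb0, Subtype.ext hc0, Subtype.ext hq⟩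
  have hfsurj : Function.Surjective f := by
    intro x
    have hx : x ∈ ker t ⊔ p := by rw [hp.sup_eq_top]; trivial
    obtain ⟨k, hk, a, ha, rfl⟩ := Submodule.mem_sup.1 hx
    rw [← hD2] at hk
    obtain ⟨bb, hbb, dd, hdd, rfl⟩ := Submodule.mem_sup.1 hk
    rw [← hE2] at hbb
    obtain ⟨rr, hrr, ee, hee, rfl⟩ := Submodule.mem_sup.1 hbb
    refine ⟨(⟨a, ha⟩, ⟨dd, hdd⟩, ⟨ee, hee⟩, ⟨rr, hrr⟩), ?_⟩
    rw [hfapp]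
    abel
  set Φ : (↥p × ↥D × ↥E × ↥(range t)) ≃ₗ[ℂ] V := LinearEquiv.ofBijective f ⟨hfinj, hfsurj⟩
    with hΦdef
  have hf'inj : Function.Injective f' := by
    rw [← LinearMap.ker_eq_bot, eq_bot_iff]
    rintro ⟨a, b, c, r⟩ hq
    rw [LinearMap.mem_ker, hf'app] at hq
    have hbcr : (b : V) + ((c : V) + (r : V)) ∈ ker t' :=
      add_mem (hDK' b.2) (add_mem (h2' (hEB' c.2)) (h2' (h1' r.2)))
    have ha0 : (a : V) = 0 := by
      have hmem : (a : V) ∈ ker t' ⊓ p' :=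
        ⟨by rw [eq_neg_of_add_eq_zero_left hq]; exact neg_mem hbcr, a.2⟩
      rwa [hp'.inf_eq_bot, Submodule.mem_bot] at hmem
    rw [ha0, zero_add] at hq
    have hcr : (c : V) + (r : V) ∈ B' := add_mem (hEB' c.2) (h1' r.2)
    have hb0 : (b : V) = 0 := by
      have hmem : (b : V) ∈ B' ⊓ D' :=
        ⟨by rw [eq_neg_of_add_eq_zero_left hq]; exact neg_mem hcr, b.2⟩
      rwa [hD1', Submodule.mem_bot] at hmem
    rw [hb0, zero_add] at hq
    have hc0 : (c : V) = 0 := by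
      have hmem : (c : V) ∈ range t' ⊓ E' :=
        ⟨by rw [eq_neg_of_add_eq_zero_left hq]; exact neg_mem r.2, c.2⟩
      rwa [hE1', Submodule.mem_bot] at hmem
    rw [hc0, zero_add] at hq
    simp only [SetLike.mem_coe, Submodule.mem_bot, Prod.mk_eq_zero]
    exact ⟨Subtype.ext ha0, Subtype.ext hb0, Subtype.ext hc0, Subtype.ext hq⟩
  have hf'surj : Function.Surjective f' := by
    intro x
    have hx : x ∈ ker t' ⊔ p' := by rw [hp'.sup_eq_top]; trivial
    obtain ⟨k, hk, a, ha, rfl⟩ := Submodule.mem_sup.1 hx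
    rw [← hD2'] at hk
    obtain ⟨bb, hbb, dd, hdd, rfl⟩ := Submodule.mem_sup.1 hk
    rw [← hE2'] at hbb
    obtain ⟨rr, hrr, ee, hee, rfl⟩ := Submodule.mem_sup.1 hbb
    refine ⟨(⟨a, ha⟩, ⟨dd, hdd⟩, ⟨ee, hee⟩, ⟨rr, hrr⟩), ?_⟩
    rw [hf'app]
    abel
  set Φ' : (↥p' × ↥D' × ↥E' × ↥(range t')) ≃ₗ[ℂ] V := LinearEquiv.ofBijective f' ⟨hf'inj, hf'surj⟩
    with hΦ'def
  set ψ : (↥p × ↥D × ↥E × ↥(range t)) ≃ₗ[ℂ] (↥p' × ↥D' × ↥E' × ↥(range t')) :=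
    gp.prodCongr (gD.prodCongr (gE.prodCongr gR)) with hψdef
  set g : V ≃ₗ[ℂ] V := (Φ.symm.trans ψ).trans Φ' with hgdef
  have hΦapp : ∀ q, Φ q = f q := fun q => rfl
  have hΦ'app : ∀ q, Φ' q = f' q := fun q => rfl
  have hg : ∀ q, g (f q) = f' (ψ q) := by
    intro q
    have h0 : Φ.symm (f q) = q := by rw [← hΦapp, LinearEquiv.symm_apply_apply]
    rw [hgdef]
    simp only [LinearEquiv.trans_apply, h0]
    exact hΦ'app _
  have hψapp : ∀ q : ↥p × ↥D × ↥E × ↥(range t),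
      ψ q = (gp q.1, gD q.2.1, gE q.2.2.1, gR q.2.2.2) := fun q => rfl
  -- specializations
  have hgr : ∀ s : ↥(range t), g (s : V) = (gR s : V) := by
    intro s
    have := hg (0, 0, 0, s)
    rw [hfapp, hψapp, hf'app] at this
    simpa using this
  have hge : ∀ s : ↥E, g (s : V) = (gE s : V) := by
    intro s
    have := hg (0, 0, s, 0)
    rw [hfapp, hψapp, hf'app] at this
    simpa using this
  have hcomm : ∀ y, t' (g y) = g (t y) := by
    intro y
    obtain ⟨⟨a, b, c, r⟩, rfl⟩ := hfsurj y
    rw [hg, hψapp, hf'app, hfapp]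
    simp only [map_add]
    have hb : t (b : V) = 0 := LinearMap.mem_ker.1 (hDK b.2)
    have hc : t (c : V) = 0 := LinearMap.mem_ker.1 (h2 (hEB c.2))
    have hr0 : t (r : V) = 0 := LinearMap.mem_ker.1 (h2 (h1 r.2))
    have hb' : t' ((gD b : V)) = 0 := LinearMap.mem_ker.1 (hDK' (gD b).2)
    have hc' : t' ((gE c : V)) = 0 := LinearMap.mem_ker.1 (h2' (hEB' (gE c).2))
    have hr' : t' ((gR r : V)) = 0 := LinearMap.mem_ker.1 (h2' (h1' (gR r).2))
    rw [hb, hc, hr0, hb', hc', hr']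
    simp only [add_zero]
    rw [← htp a, hgr (tp a), ← htp' (gp a)]
    rw [hgRdef]
    simp
  refine ⟨g, ?_, ?_⟩
  · ext x
    have := hcomm (g.symm x)
    rw [LinearEquiv.apply_symm_apply] at this
    simp only [LinearMap.coe_comp, Function.comp_apply, LinearEquiv.coe_coe]
    exact this
  · apply le_antisymm
    · intro y hy
      rw [← hE2'] at hy
      obtain ⟨r', hr', e', he', rfl⟩ := Submodule.mem_sup.1 hy
      refine ⟨((gR.symm ⟨r', hr'⟩ : V) + (gE.symm ⟨e', he'⟩ : V)),
        add_mem (h1 (gR.symm ⟨r', hr'⟩).2) (hEB (gE.symm ⟨e', he'⟩).2), ?_⟩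
      simp only [LinearEquiv.coe_coe, map_add]
      rw [hgr, hge]
      simp
    · rintro _ ⟨x, hx, rfl⟩
      rw [← hE2] at hx
      obtain ⟨r, hrm, e, hem, rfl⟩ := Submodule.mem_sup.1 hx
      simp only [LinearEquiv.coe_coe, map_add]
      rw [← hE2']
      have h1g := hgr ⟨r, hrm⟩
      have h2g := hge ⟨e, hem⟩
      simp only [Submodule.coe_mk] at h1g h2g
      rw [h1g, h2g]
      exact Submodule.mem_sup.2 ⟨_, (gR ⟨r, hrm⟩).2, _, (gE ⟨e, hem⟩).2, rfl⟩


private noncomputable def W (d a : ℕ) (h : a ≤ d) : Submodule ℂ (Fin d → ℂ) :=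
  LinearMap.ker (LinearMap.funLeft ℂ ℂ (Fin.castLE h))

private lemma memW {d a : ℕ} (h : a ≤ d) (x : Fin d → ℂ) :
    x ∈ W d a h ↔ ∀ i : Fin a, x (Fin.castLE h i) = 0 := by
  simp [W, LinearMap.mem_ker, LinearMap.funLeft, funext_iff]

private lemma W_mono {d a b : ℕ} (ha : a ≤ d) (hb : b ≤ d) (hba : b ≤ a) :
    W d a ha ≤ W d b hb := by
  intro x hx
  rw [memW] at hx ⊢
  intro i
  exact hx ⟨(i : ℕ), lt_of_lt_of_le i.2 hba⟩

private lemma W_finrank {d a : ℕ} (h : a ≤ d) :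
    finrank ℂ ↥(W d a h) + a = d := by
  have hsurj : Function.Surjective (LinearMap.funLeft ℂ ℂ (Fin.castLE h)) :=
    LinearMap.funLeft_surjective_of_injective ℂ ℂ _ (Fin.castLE_injective h)
  have e1 := LinearMap.finrank_range_add_finrank_ker (LinearMap.funLeft ℂ ℂ (Fin.castLE h))
  rw [LinearMap.range_eq_top.2 hsurj] at e1
  rw [finrank_top, finrank_fin_fun, finrank_fin_fun] at e1
  have e2 : finrank ℂ ↥(W d a h) = finrank ℂ ↥(ker (LinearMap.funLeft ℂ ℂ (Fin.castLE h))) := rfl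
  omega

private noncomputable def shiftMap (d v₀ : ℕ) : (Fin d → ℂ) →ₗ[ℂ] (Fin d → ℂ) where
  toFun x := fun j => if hj : d - v₀ ≤ (j : ℕ) then
      x ⟨(j : ℕ) - (d - v₀), by have := j.isLt; omega⟩ else 0
  map_add' x y := by
    ext j
    by_cases hj : d - v₀ ≤ (j : ℕ)
    · simp only [dif_pos hj, Pi.add_apply]
    · simp only [dif_neg hj, Pi.add_apply, add_zero]
  map_smul' c x := by
    ext j
    by_cases hj : d - v₀ ≤ (j : ℕ)
    · simp only [dif_pos hj, Pi.smul_apply, RingHom.id_apply, smul_eq_mul]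
    · simp only [dif_neg hj, Pi.smul_apply, RingHom.id_apply, smul_eq_mul, mul_zero]

private lemma shiftMap_ker {d v₀ : ℕ} (h : v₀ + v₀ ≤ d) :
    LinearMap.ker (shiftMap d v₀) = W d v₀ (by omega) := by
  ext x
  rw [LinearMap.mem_ker, memW]
  constructor
  · intro hx i
    have h2 := congrFun hx ⟨(i : ℕ) + (d - v₀), by have := i.isLt; omega⟩
    simp only [shiftMap, LinearMap.coe_mk, AddHom.coe_mk] at h2
    rw [dif_pos (by omega : d - v₀ ≤ (i : ℕ) + (d - v₀))] at h2
    rw [show ((⟨(i:ℕ) + (d - v₀) - (d - v₀), _⟩ : Fin d)) = Fin.castLE (by omega) i from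
      Fin.ext (by simp)] at h2
    exact h2
  · intro hx
    ext j
    simp only [shiftMap, LinearMap.coe_mk, AddHom.coe_mk, Pi.zero_apply]
    split
    · next hj =>
      have := hx ⟨(j : ℕ) - (d - v₀), by have := j.isLt; omega⟩
      rw [show Fin.castLE (by omega : v₀ ≤ d) ⟨(j : ℕ) - (d - v₀), by have := j.isLt; omega⟩ =
        (⟨(j : ℕ) - (d - v₀), by have := j.isLt; omega⟩ : Fin d) from Fin.ext (by simp)] at this
      exact this
    · rfl

private lemma shiftMap_range {d v₀ : ℕ} (h : v₀ + v₀ ≤ d) :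
    LinearMap.range (shiftMap d v₀) = W d (d - v₀) (by omega) := by
  apply le_antisymm
  · rintro _ ⟨x, rfl⟩
    rw [memW]
    intro i
    simp only [shiftMap, LinearMap.coe_mk, AddHom.coe_mk]
    rw [dif_neg]
    simp only [Fin.coe_castLE]
    have := i.isLt
    omega
  · intro y hy
    rw [memW] at hy
    refine ⟨fun i => if hi : (i : ℕ) < v₀ then y ⟨(i : ℕ) + (d - v₀), by omega⟩ else 0, ?_⟩
    ext j
    simp only [shiftMap, LinearMap.coe_mk, AddHom.coe_mk]
    split
    · next hj =>
      have hv : ((⟨(j : ℕ) - (d - v₀), by have := j.isLt; omega⟩ : Fin d) : ℕ) < v₀ := by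
        simp only [Fin.val_mk]; have := j.isLt; omega
      rw [dif_pos hv]
      exact congrArg y (Fin.ext (by simp only [Fin.val_mk]; have := j.isLt; omega))
    · next hj =>
      have := hy ⟨(j : ℕ), by omega⟩
      rw [show Fin.castLE (by omega : d - v₀ ≤ d) ⟨(j : ℕ), by omega⟩ = j from
        Fin.ext (by simp)] at this
      exact this.symm


/-- For the quiver with one vertex and no edges, the variety `M(d, v₀, v)` of
pairs `(t, B)` with `t ∈ End ℂᵈ`, `t² = 0`, `rank t = v₀` and `B ⊆ ℂᵈ` with
`im t ⊆ B ⊆ ker t`, `dim B = d - v`, is nonempty if and only if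
`v₀ ≤ v ≤ d - v₀`.  When nonempty it is a smooth connected quasi-projective
variety: this is expressed by the fact that the (connected) group `GL(d, ℂ)`
acts transitively on it, `g · (t, B) = (g t g⁻¹, g B)`, so it is a homogeneous
space. -/
theorem stmt16 (d v₀ v : ℕ) :
    ((∃ (t : (Fin d → ℂ) →ₗ[ℂ] (Fin d → ℂ)) (B : Submodule ℂ (Fin d → ℂ)),
        t ∘ₗ t = 0 ∧ Module.finrank ℂ (LinearMap.range t) = v₀ ∧
        LinearMap.range t ≤ B ∧ B ≤ LinearMap.ker t ∧
        (Module.finrank ℂ B : ℤ) = (d : ℤ) - v) ↔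
      (v₀ ≤ v ∧ (v : ℤ) ≤ (d : ℤ) - v₀)) ∧
    (∀ (t t' : (Fin d → ℂ) →ₗ[ℂ] (Fin d → ℂ)) (B B' : Submodule ℂ (Fin d → ℂ)),
      t ∘ₗ t = 0 → Module.finrank ℂ (LinearMap.range t) = v₀ →
      LinearMap.range t ≤ B → B ≤ LinearMap.ker t →
      (Module.finrank ℂ B : ℤ) = (d : ℤ) - v →
      t' ∘ₗ t' = 0 → Module.finrank ℂ (LinearMap.range t') = v₀ →
      LinearMap.range t' ≤ B' → B' ≤ LinearMap.ker t' →
      (Module.finrank ℂ B' : ℤ) = (d : ℤ) - v →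
      ∃ g : (Fin d → ℂ) ≃ₗ[ℂ] (Fin d → ℂ),
        t' = (g : (Fin d → ℂ) →ₗ[ℂ] (Fin d → ℂ)) ∘ₗ t ∘ₗ
          (g.symm : (Fin d → ℂ) →ₗ[ℂ] (Fin d → ℂ)) ∧
        B' = B.map (g : (Fin d → ℂ) →ₗ[ℂ] (Fin d → ℂ))) := by
  constructor
  · constructor
    · rintro ⟨t, B, ht2, hrk, h1, h2, hfB⟩
      have hd : finrank ℂ (Fin d → ℂ) = d := finrank_fin_fun ℂ
      have e1 := LinearMap.finrank_range_add_finrank_ker t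
      rw [hd] at e1
      have e2 : finrank ℂ ↥B ≤ finrank ℂ ↥(LinearMap.ker t) := Submodule.finrank_mono h2
      have e3 : finrank ℂ ↥(LinearMap.range t) ≤ finrank ℂ ↥B := Submodule.finrank_mono h1
      constructor <;> omega
    · rintro ⟨hv1, hv2⟩
      have hvd1 : v ≤ d := by omega
      have hvd2 : v₀ + v₀ ≤ d := by omega
      have hrange := shiftMap_range (d := d) (v₀ := v₀) hvd2
      have hker := shiftMap_ker (d := d) (v₀ := v₀) hvd2
      have hrk : LinearMap.range (shiftMap d v₀) ≤ LinearMap.ker (shiftMap d v₀) := by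
        rw [hrange, hker]
        exact W_mono _ _ (by omega)
      refine ⟨shiftMap d v₀, W d v hvd1, ?_, ?_, ?_, ?_, ?_⟩
      · apply LinearMap.ext
        intro x
        simp only [LinearMap.comp_apply, LinearMap.zero_apply]
        exact LinearMap.mem_ker.1 (hrk (LinearMap.mem_range_self (shiftMap d v₀) x))
      · rw [hrange]
        have := W_finrank (d := d) (a := d - v₀) (by omega)
        omega
      · rw [hrange]
        exact W_mono _ _ (by omega)
      · rw [hker]
        exact W_mono _ _ (by omega)
      · have := W_finrank (d := d) (a := v) hvd1
        omega
  · intro t t' B B' ht2 hrk h1 h2 hfB ht2' hrk' h1' h2' hfB'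
    have hBB : finrank ℂ ↥B = finrank ℂ ↥B' := by omega
    exact transKey t t' B B' h1 h2 h1' h2' (by rw [hrk, hrk']) hBB
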